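/- Let H be a non-zero k-local Hermitian operator on (ℂ²)^{⊗n} with rank r. Then r ≥ 2^{n − (2 log₂ e)·k} (equivalently, r ≥ 2^n · e^{−2k}). -/

import Mathlib

noncomputable section

open Matrix

/-- The single-qubit Pauli matrices `σ_0 = I, σ_1 = X, σ_2 = Y, σ_3 = Z`. -/
def pauli : Fin 4 → Matrix (Fin 2) (Fin 2) ℂ
  | 0 => 1
  | 1 => !![0, 1; 1, 0]
  | 2 => !![0, -Complex.I; Complex.I, 0]
  | 3 => !![1, 0; 0, -1]

/-- The `n`-qubit Pauli operator `σ_s = σ_{s_1} ⊗ ⋯ ⊗ σ_{s_n}`, as a matrix on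
`(ℂ²)^{⊗n}` (indexed by functions `Fin n → Fin 2`). -/
def pauliTensor {n : ℕ} (s : Fin n → Fin 4) :
    Matrix (Fin n → Fin 2) (Fin n → Fin 2) ℂ :=
  Matrix.of fun a b => ∏ i, pauli (s i) (a i) (b i)

/-- The Pauli (Fourier) coefficient `M̂(s) = 2^{-n} tr(σ_s M)`. -/
def pauliCoeff {n : ℕ} (M : Matrix (Fin n → Fin 2) (Fin n → Fin 2) ℂ)
    (s : Fin n → Fin 4) : ℂ :=
  (2 ^ n : ℂ)⁻¹ * (pauliTensor s * M).trace

/-- The weight `|s|` of a Pauli string: the number of nonzero entries. -/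
def pauliWeight {n : ℕ} (s : Fin n → Fin 4) : ℕ :=
  (Finset.univ.filter fun i => s i ≠ 0).card

/-- An operator on `n` qubits is `k`-local if all its Pauli coefficients on strings of
weight greater than `k` vanish. -/
def IsKLocal {n : ℕ} (k : ℕ) (M : Matrix (Fin n → Fin 2) (Fin n → Fin 2) ℂ) : Prop :=
  ∀ s : Fin n → Fin 4, k < pauliWeight s → pauliCoeff M s = 0

/-- The normalised Schatten `p`-norm `‖M‖_p = ((dim)⁻¹ tr|M|^p)^{1/p}`, where the
singular values of `M` are the square roots of the eigenvalues of `MᴴM`. -/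
def schattenNorm {ι : Type*} [Fintype ι] [DecidableEq ι] (p : ℝ)
    (M : Matrix ι ι ℂ) : ℝ :=
  ((Fintype.card ι : ℝ)⁻¹ *
    ∑ i, Real.sqrt ((isHermitian_conjTranspose_mul_self M).eigenvalues i) ^ p) ^ (1 / p)

lemma pauli_orthog (a b c d : Fin 2) :
    ∑ j : Fin 4, pauli j a b * pauli j c d = if a = d ∧ b = c then 2 else 0 := by
  fin_cases a <;> fin_cases b <;> fin_cases c <;> fin_cases d <;>
    simp [Fin.sum_univ_four, pauli, Matrix.one_apply, Complex.I_mul_I] <;> ring_nf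

lemma pauliTensor_orthog {n : ℕ} (a b c d : Fin n → Fin 2) :
    ∑ s : Fin n → Fin 4, pauliTensor s c d * pauliTensor s a b
      = if c = b ∧ d = a then (2:ℂ)^n else 0 := by
  have h1 : ∀ s : Fin n → Fin 4, pauliTensor s c d * pauliTensor s a b
      = ∏ i, (pauli (s i) (c i) (d i) * pauli (s i) (a i) (b i)) := by
    intro s; simp [pauliTensor, Finset.prod_mul_distrib]
  simp_rw [h1]
  rw [← Fintype.prod_sum (fun i (j : Fin 4) => pauli j (c i) (d i) * pauli j (a i) (b i))]
  simp_rw [pauli_orthog]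
  by_cases h : c = b ∧ d = a
  · rw [if_pos h]
    obtain ⟨h1, h2⟩ := h
    subst h1; subst h2
    simp
  · rw [if_neg h]
    have hex : ∃ i, ¬(c i = b i ∧ d i = a i) := by
      by_contra hc
      push_neg at hc
      exact h ⟨funext fun i => (hc i).1, funext fun i => (hc i).2⟩
    obtain ⟨i, hi⟩ := hex
    exact Finset.prod_eq_zero (Finset.mem_univ i) (if_neg hi)

lemma pauli_expansion_aux {n : ℕ} (M : Matrix (Fin n → Fin 2) (Fin n → Fin 2) ℂ)
    (a b : Fin n → Fin 2) :
    ∑ s : Fin n → Fin 4, (∑ c, ∑ d, pauliTensor s c d * M d c) * pauliTensor s a b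
      = 2^n * M a b := by
  calc ∑ s : Fin n → Fin 4, (∑ c, ∑ d, pauliTensor s c d * M d c) * pauliTensor s a b
      = ∑ s : Fin n → Fin 4, ∑ c, ∑ d,
          pauliTensor s c d * M d c * pauliTensor s a b := by
        simp_rw [Finset.sum_mul]
    _ = ∑ c, ∑ d, ∑ s : Fin n → Fin 4,
          pauliTensor s c d * M d c * pauliTensor s a b := by
        rw [Finset.sum_comm]
        exact Finset.sum_congr rfl fun c _ => Finset.sum_comm
    _ = ∑ c, ∑ d, M d c * ∑ s : Fin n → Fin 4,
          pauliTensor s c d * pauliTensor s a b := by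
        refine Finset.sum_congr rfl fun c _ => Finset.sum_congr rfl fun d _ => ?_
        rw [Finset.mul_sum]
        exact Finset.sum_congr rfl fun s _ => by ring
    _ = 2^n * M a b := by
        simp_rw [pauliTensor_orthog]
        simp [ite_and, mul_ite, Finset.sum_ite_eq']
        ring

lemma pauli_expansion {n : ℕ} (M : Matrix (Fin n → Fin 2) (Fin n → Fin 2) ℂ)
    (a b : Fin n → Fin 2) :
    ∑ s : Fin n → Fin 4, pauliCoeff M s * pauliTensor s a b = M a b := by
  have h2n : (2:ℂ)^n ≠ 0 := pow_ne_zero n two_ne_zero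
  have : ∑ s : Fin n → Fin 4, pauliCoeff M s * pauliTensor s a b
      = (2^n : ℂ)⁻¹ * ∑ s : Fin n → Fin 4,
          (∑ c, ∑ d, pauliTensor s c d * M d c) * pauliTensor s a b := by
    rw [Finset.mul_sum]
    refine Finset.sum_congr rfl fun s _ => ?_
    simp only [pauliCoeff, Matrix.trace, Matrix.diag, Matrix.mul_apply]
    ring
  rw [this, pauli_expansion_aux, inv_mul_cancel_left₀ h2n]

lemma eq_zero_of_pauliCoeff {n : ℕ} (M : Matrix (Fin n → Fin 2) (Fin n → Fin 2) ℂ)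
    (h : ∀ s, pauliCoeff M s = 0) : M = 0 := by
  ext a b
  rw [← pauli_expansion M a b]
  simp [h]

/-- Block of a matrix on `n+1` qubits obtained by fixing the first index. -/
def blk {n : ℕ} (H : Matrix (Fin (n+1) → Fin 2) (Fin (n+1) → Fin 2) ℂ) (a b : Fin 2) :
    Matrix (Fin n → Fin 2) (Fin n → Fin 2) ℂ :=
  Matrix.of fun x y => H (Fin.cons a x) (Fin.cons b y)

/-- The `j`-th Pauli component of `H` along the first qubit. -/
def bc {n : ℕ} (H : Matrix (Fin (n+1) → Fin 2) (Fin (n+1) → Fin 2) ℂ) (j : Fin 4) :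
    Matrix (Fin n → Fin 2) (Fin n → Fin 2) ℂ :=
  (2:ℂ)⁻¹ • ∑ a : Fin 2, ∑ b : Fin 2, pauli j a b • blk H b a

lemma sum_cons {n : ℕ} (g : (Fin (n+1) → Fin 2) → ℂ) :
    ∑ u, g u = ∑ a : Fin 2, ∑ x : Fin n → Fin 2, g (Fin.cons a x) := by
  rw [← (Fin.consEquiv (fun _ => Fin 2)).sum_comp g, Fintype.sum_prod_type]
  rfl

lemma pauliTensor_cons {n : ℕ} (j : Fin 4) (s : Fin n → Fin 4) (a b : Fin 2)
    (x y : Fin n → Fin 2) :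
    pauliTensor (Fin.cons j s) (Fin.cons a x) (Fin.cons b y)
      = pauli j a b * pauliTensor s x y := by
  simp [pauliTensor, Fin.prod_univ_succ]

lemma trace_cons {n : ℕ} (H : Matrix (Fin (n+1) → Fin 2) (Fin (n+1) → Fin 2) ℂ)
    (j : Fin 4) (s : Fin n → Fin 4) :
    (pauliTensor (Fin.cons j s) * H).trace
      = ∑ a : Fin 2, ∑ b : Fin 2, pauli j a b * (pauliTensor s * blk H b a).trace := by
  simp only [Matrix.trace, Matrix.diag, Matrix.mul_apply]
  rw [sum_cons (fun u => ∑ v, pauliTensor (Fin.cons j s) u v * H v u)]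
  refine Finset.sum_congr rfl fun a _ => ?_
  calc ∑ x, ∑ v, pauliTensor (Fin.cons j s) (Fin.cons a x) v * H v (Fin.cons a x)
      = ∑ x, ∑ b : Fin 2, ∑ y, pauliTensor (Fin.cons j s) (Fin.cons a x) (Fin.cons b y)
          * H (Fin.cons b y) (Fin.cons a x) := by
        exact Finset.sum_congr rfl fun x _ => sum_cons _
    _ = ∑ b : Fin 2, ∑ x, ∑ y, pauli j a b * (pauliTensor s x y * blk H b a y x) := by
        rw [Finset.sum_comm]
        refine Finset.sum_congr rfl fun b _ => Finset.sum_congr rfl fun x _ =>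
          Finset.sum_congr rfl fun y _ => ?_
        rw [pauliTensor_cons]
        simp only [blk, Matrix.of_apply]
        ring
    _ = ∑ b : Fin 2, pauli j a b * ∑ x, ∑ y, pauliTensor s x y * blk H b a y x := by
        refine Finset.sum_congr rfl fun b _ => ?_
        rw [Finset.mul_sum]
        exact Finset.sum_congr rfl fun x _ => (Finset.mul_sum _ _ _).symm
    _ = ∑ b : Fin 2, pauli j a b * (pauliTensor s * blk H b a).trace := by
        simp [Matrix.trace, Matrix.diag, Matrix.mul_apply]

lemma coeff_bc {n : ℕ} (H : Matrix (Fin (n+1) → Fin 2) (Fin (n+1) → Fin 2) ℂ)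
    (j : Fin 4) (s : Fin n → Fin 4) :
    pauliCoeff (bc H j) s = pauliCoeff H (Fin.cons j s) := by
  simp only [pauliCoeff, trace_cons, bc]
  simp only [Matrix.mul_smul, Matrix.mul_sum, Matrix.trace_smul, Matrix.trace_sum,
    smul_eq_mul]
  rw [pow_succ]
  rw [Finset.mul_sum, Finset.mul_sum, Finset.mul_sum]
  ring_nf

lemma blk_eq_sum {n : ℕ} (H : Matrix (Fin (n+1) → Fin 2) (Fin (n+1) → Fin 2) ℂ)
    (a b : Fin 2) : blk H a b = ∑ j : Fin 4, pauli j a b • bc H j := by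
  ext x y
  simp only [bc, Matrix.sum_apply, Matrix.smul_apply, smul_eq_mul, Fin.sum_univ_four,
    Fin.sum_univ_two]
  fin_cases a <;> fin_cases b <;>
    simp [pauli, Matrix.one_apply, blk] <;> ring_nf <;>
    simp [Complex.I_sq] <;> ring

lemma pauliWeight_cons {n : ℕ} (j : Fin 4) (s : Fin n → Fin 4) :
    pauliWeight (Fin.cons j s) = (if j = 0 then 0 else 1) + pauliWeight s := by
  classical
  simp only [pauliWeight, Finset.card_filter]
  rw [Fin.sum_univ_succ]
  simp [Fin.cons_zero, Fin.cons_succ]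

section RankLemmas

variable {ι κ : Type*} [Fintype ι] [Fintype κ] [DecidableEq ι] [DecidableEq κ]

lemma rank_submatrix_le' {ι' κ' : Type*} [Fintype ι'] [Fintype κ']
    (A : Matrix ι κ ℂ) (f : ι' → ι) (g : κ' → κ) :
    (A.submatrix f g).rank ≤ A.rank := by
  have h : A.submatrix f g =
      (Matrix.of fun i j => if j = f i then (1:ℂ) else 0) * A *
      (Matrix.of fun j k => if j = g k then (1:ℂ) else 0) := by
    ext i k
    simp [Matrix.mul_apply, ite_mul, mul_ite, Finset.sum_ite_eq, Finset.sum_ite_eq']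
  rw [h]
  exact (Matrix.rank_mul_le_left _ _).trans (Matrix.rank_mul_le_right _ _)

lemma rank_smul_le (c : ℂ) (A : Matrix ι κ ℂ) : (c • A).rank ≤ A.rank := by
  have h : c • A = (c • (1 : Matrix ι ι ℂ)) * A := by
    rw [Matrix.smul_mul, Matrix.one_mul]
  rw [h]
  exact Matrix.rank_mul_le_right _ _

lemma rank_add_le' (A B : Matrix ι κ ℂ) : (A + B).rank ≤ A.rank + B.rank := by
  classical
  have hr : LinearMap.range (A + B).mulVecLin ≤
      LinearMap.range A.mulVecLin ⊔ LinearMap.range B.mulVecLin := by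
    rintro w ⟨v, rfl⟩
    rw [Matrix.mulVecLin_add]
    exact Submodule.add_mem_sup (LinearMap.mem_range_self _ v) (LinearMap.mem_range_self _ v)
  calc (A + B).rank = Module.finrank ℂ (LinearMap.range (A + B).mulVecLin) := rfl
    _ ≤ Module.finrank ℂ ↥(LinearMap.range A.mulVecLin ⊔ LinearMap.range B.mulVecLin) :=
        Submodule.finrank_mono hr
    _ ≤ A.rank + B.rank := by
        have h2 := Submodule.finrank_sup_add_finrank_inf_eq
          (LinearMap.range A.mulVecLin) (LinearMap.range B.mulVecLin)
        rw [Matrix.rank, Matrix.rank]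
        omega

lemma rank_pos_of_ne_zero (A : Matrix ι κ ℂ) (h : A ≠ 0) : 1 ≤ A.rank := by
  by_contra hc
  push_neg at hc
  interval_cases hA : A.rank
  · apply h
    have hrange : LinearMap.range A.mulVecLin = ⊥ := by
      rw [← Submodule.finrank_eq_zero (R := ℂ)]
      exact hA
    ext i j
    have : A.mulVec (Pi.single j 1) = 0 := by
      have : A.mulVec (Pi.single j 1) ∈ LinearMap.range A.mulVecLin :=
        LinearMap.mem_range_self _ _
      rw [hrange] at this
      simpa using this
    have := congrFun this i
    simpa [Matrix.mulVec, dotProduct, Pi.single_apply, mul_ite,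
      Finset.sum_ite_eq'] using this

end RankLemmas

section FromBlocks

variable {ι : Type*} [Fintype ι] [DecidableEq ι]

/-- Extension by zero on the left summand, as a linear map. -/
def inlL (ι : Type*) : (ι → ℂ) →ₗ[ℂ] ((ι ⊕ ι) → ℂ) where
  toFun u := Sum.elim u 0
  map_add' u v := by funext x; cases x <;> simp
  map_smul' c u := by funext x; cases x <;> simp

def inrL (ι : Type*) : (ι → ℂ) →ₗ[ℂ] ((ι ⊕ ι) → ℂ) where
  toFun u := Sum.elim 0 u
  map_add' u v := by funext x; cases x <;> simp
  map_smul' c u := by funext x; cases x <;> simp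

lemma rank_fromBlocks_ge (A D : Matrix ι ι ℂ) :
    A.rank + D.rank ≤ (Matrix.fromBlocks A 0 0 D).rank := by
  classical
  set F := Matrix.fromBlocks A 0 0 D with hF
  set L := F.mulVecLin
  have hinl : ∀ u : ι → ℂ, F.mulVec (Sum.elim u (0 : ι → ℂ)) = Sum.elim (A.mulVec u) (0 : ι → ℂ) := by
    intro u
    rw [hF, Matrix.fromBlocks_mulVec]
    simp
  have hinr : ∀ u : ι → ℂ, F.mulVec (Sum.elim (0 : ι → ℂ) u) = Sum.elim (0 : ι → ℂ) (D.mulVec u) := by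
    intro u
    rw [hF, Matrix.fromBlocks_mulVec]
    simp
  set p := (LinearMap.range A.mulVecLin).map (inlL ι) with hp
  set q := (LinearMap.range D.mulVecLin).map (inrL ι) with hq
  have hpq : p ⊓ q = ⊥ := by
    rw [Submodule.eq_bot_iff]
    rintro w ⟨hwp, hwq⟩
    obtain ⟨x, -, rfl⟩ := hwp
    obtain ⟨y, -, hyx⟩ := hwq
    funext z
    cases z with
    | inl z =>
        have := congrFun hyx (Sum.inl z)
        simp [inlL, inrL] at this ⊢
        exact this.symm
    | inr z =>
        simp [inlL]
  have hple : p ≤ LinearMap.range L := by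
    rintro w ⟨x, ⟨u, rfl⟩, rfl⟩
    exact ⟨Sum.elim u (0 : ι → ℂ), hinl u⟩
  have hqle : q ≤ LinearMap.range L := by
    rintro w ⟨x, ⟨u, rfl⟩, rfl⟩
    exact ⟨Sum.elim (0 : ι → ℂ) u, hinr u⟩
  have hinj1 : Function.Injective (inlL ι) := by
    intro u v huv
    funext z
    exact congrFun huv (Sum.inl z)
  have hinj2 : Function.Injective (inrL ι) := by
    intro u v huv
    funext z
    exact congrFun huv (Sum.inr z)
  have hfp : Module.finrank ℂ p = A.rank :=
    (LinearEquiv.finrank_eq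
      (Submodule.equivMapOfInjective _ hinj1 (LinearMap.range A.mulVecLin))).symm
  have hfq : Module.finrank ℂ q = D.rank :=
    (LinearEquiv.finrank_eq
      (Submodule.equivMapOfInjective _ hinj2 (LinearMap.range D.mulVecLin))).symm
  have hsup := Submodule.finrank_sup_add_finrank_inf_eq p q
  rw [hpq] at hsup
  simp only [finrank_bot, add_zero] at hsup
  calc A.rank + D.rank = Module.finrank ℂ ↥(p ⊔ q) := by rw [hsup, hfp, hfq]
    _ ≤ Module.finrank ℂ (LinearMap.range L) := Submodule.finrank_mono (sup_le hple hqle)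
    _ = F.rank := rfl

end FromBlocks

lemma rank_blk_le {n : ℕ} (H : Matrix (Fin (n+1) → Fin 2) (Fin (n+1) → Fin 2) ℂ)
    (a b : Fin 2) : (blk H a b).rank ≤ H.rank :=
  rank_submatrix_le' H (Fin.cons a) (Fin.cons b)

lemma rank_aux {ι κ : Type*} [Fintype ι] [Fintype κ] [DecidableEq ι] [DecidableEq κ]
    (A B : Matrix ι κ ℂ) (c d : ℂ) (r : ℕ) (hA : A.rank ≤ r) (hB : B.rank ≤ r) :
    ((2:ℂ)⁻¹ • (c • A + d • B)).rank ≤ 2 * r := by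
  calc ((2:ℂ)⁻¹ • (c • A + d • B)).rank ≤ (c • A + d • B).rank := rank_smul_le _ _
    _ ≤ (c • A).rank + (d • B).rank := rank_add_le' _ _
    _ ≤ A.rank + B.rank := add_le_add (rank_smul_le _ _) (rank_smul_le _ _)
    _ ≤ 2 * r := by omega

lemma bc_one {n : ℕ} (H : Matrix (Fin (n+1) → Fin 2) (Fin (n+1) → Fin 2) ℂ) :
    bc H 1 = (2:ℂ)⁻¹ • ((1:ℂ) • blk H 1 0 + (1:ℂ) • blk H 0 1) := by
  simp [bc, Fin.sum_univ_two, pauli]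

lemma bc_two {n : ℕ} (H : Matrix (Fin (n+1) → Fin 2) (Fin (n+1) → Fin 2) ℂ) :
    bc H 2 = (2:ℂ)⁻¹ • ((-Complex.I) • blk H 1 0 + Complex.I • blk H 0 1) := by
  simp [bc, Fin.sum_univ_two, pauli]

lemma bc_three {n : ℕ} (H : Matrix (Fin (n+1) → Fin 2) (Fin (n+1) → Fin 2) ℂ) :
    bc H 3 = (2:ℂ)⁻¹ • ((1:ℂ) • blk H 0 0 + (-1:ℂ) • blk H 1 1) := by
  simp [bc, Fin.sum_univ_two, pauli, neg_smul]

lemma rank_bc_le {n : ℕ} (H : Matrix (Fin (n+1) → Fin 2) (Fin (n+1) → Fin 2) ℂ)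
    (j : Fin 4) (hj : j ≠ 0) : (bc H j).rank ≤ 2 * H.rank := by
  fin_cases j
  · exact absurd rfl hj
  · show (bc H 1).rank ≤ 2 * H.rank
    rw [bc_one]
    exact rank_aux _ _ _ _ _ (rank_blk_le H 1 0) (rank_blk_le H 0 1)
  · show (bc H 2).rank ≤ 2 * H.rank
    rw [bc_two]
    exact rank_aux _ _ _ _ _ (rank_blk_le H 1 0) (rank_blk_le H 0 1)
  · show (bc H 3).rank ≤ 2 * H.rank
    rw [bc_three]
    exact rank_aux _ _ _ _ _ (rank_blk_le H 0 0) (rank_blk_le H 1 1)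

/-- The reindexing equivalence splitting the first qubit. -/
def splitEquiv (n : ℕ) : ((Fin n → Fin 2) ⊕ (Fin n → Fin 2)) ≃ (Fin (n+1) → Fin 2) where
  toFun := Sum.elim (fun x => Fin.cons 0 x) (fun x => Fin.cons 1 x)
  invFun u := if u 0 = 0 then Sum.inl (Fin.tail u) else Sum.inr (Fin.tail u)
  left_inv x := by
    cases x with
    | inl x => simp [Fin.tail_cons]
    | inr x => simp [Fin.tail_cons]
  right_inv u := by
    by_cases h : u 0 = 0
    · have e : Fin.cons (0 : Fin 2) (Fin.tail u) = u := by
        rw [← h]; exact Fin.cons_self_tail u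
      simp [h, e]
    · have h1 : u 0 = 1 := by omega
      have e : Fin.cons (1 : Fin 2) (Fin.tail u) = u := by
        rw [← h1]; exact Fin.cons_self_tail u
      simp [h, e]

lemma key (n : ℕ) : ∀ (k : ℕ) (H : Matrix (Fin n → Fin 2) (Fin n → Fin 2) ℂ),
    IsKLocal k H → H ≠ 0 → 2^n ≤ 4^k * H.rank := by
  induction n with
  | zero =>
    intro k H _ hne
    have h1 : 1 ≤ H.rank := rank_pos_of_ne_zero H hne
    have h4 : 1 ≤ 4^k := Nat.one_le_pow _ _ (by norm_num)
    simpa using Nat.mul_le_mul h4 h1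
  | succ n ih =>
    intro k H hloc hne
    by_cases hB : bc H 1 = 0 ∧ bc H 2 = 0 ∧ bc H 3 = 0
    · -- "identity ⊗ M" case
      obtain ⟨h1, h2, h3⟩ := hB
      set M := bc H 0 with hM
      have hblk : ∀ a b : Fin 2, blk H a b = if a = b then M else 0 := by
        intro a b
        rw [blk_eq_sum, Fin.sum_univ_four]
        show pauli 0 a b • bc H 0 + pauli 1 a b • bc H 1 + pauli 2 a b • bc H 2
            + pauli 3 a b • bc H 3 = _
        rw [h1, h2, h3]
        fin_cases a <;> fin_cases b <;> simp [pauli, Matrix.one_apply] <;> rfl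
      have hMne : M ≠ 0 := by
        intro h0
        apply hne
        ext u v
        have h' : blk H (u 0) (v 0) = 0 := by rw [hblk, h0]; simp
        have := congrFun (congrFun h' (Fin.tail u)) (Fin.tail v)
        simpa [blk, Fin.cons_self_tail] using this
      have hMloc : IsKLocal k M := by
        intro s hs
        rw [hM, coeff_bc]
        apply hloc
        rwa [pauliWeight_cons, if_pos rfl, zero_add]
      have hIH := ih k M hMloc hMne
      have hsub : H.submatrix (splitEquiv n) (splitEquiv n) = Matrix.fromBlocks M 0 0 M := by
        ext i j
        cases i with
        | inl x =>
          cases j with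
          | inl y =>
            have := congrFun (congrFun (hblk 0 0) x) y
            simpa [splitEquiv, blk] using this
          | inr y =>
            have := congrFun (congrFun (hblk 0 1) x) y
            simpa [splitEquiv, blk] using this
        | inr x =>
          cases j with
          | inl y =>
            have := congrFun (congrFun (hblk 1 0) x) y
            simpa [splitEquiv, blk] using this
          | inr y =>
            have := congrFun (congrFun (hblk 1 1) x) y
            simpa [splitEquiv, blk] using this
      have hrank : 2 * M.rank ≤ H.rank := by
        calc 2 * M.rank = M.rank + M.rank := by ring
          _ ≤ (Matrix.fromBlocks M 0 0 M).rank := rank_fromBlocks_ge M M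
          _ = (H.submatrix (splitEquiv n) (splitEquiv n)).rank := by rw [hsub]
          _ = H.rank := Matrix.rank_submatrix H _ _
      calc 2^(n+1) = 2 * 2^n := by ring
        _ ≤ 2 * (4^k * M.rank) := Nat.mul_le_mul_left 2 hIH
        _ = 4^k * (2 * M.rank) := by ring
        _ ≤ 4^k * H.rank := Nat.mul_le_mul_left _ hrank
    · -- some non-identity component is non-zero
      have hj : ∃ j : Fin 4, j ≠ 0 ∧ bc H j ≠ 0 := by
        by_contra hc
        push_neg at hc
        exact hB ⟨hc 1 (by decide), hc 2 (by decide), hc 3 (by decide)⟩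
      obtain ⟨j, hj0, hjne⟩ := hj
      obtain ⟨k', rfl⟩ : ∃ k', k = k' + 1 := by
        cases k with
        | zero =>
          exfalso
          apply hjne
          apply eq_zero_of_pauliCoeff
          intro s
          rw [coeff_bc]
          apply hloc
          rw [pauliWeight_cons, if_neg hj0]
          omega
        | succ k' => exact ⟨k', rfl⟩
      have hjloc : IsKLocal k' (bc H j) := by
        intro s hs
        rw [coeff_bc]
        apply hloc
        rw [pauliWeight_cons, if_neg hj0]
        omega
      have hIH := ih k' (bc H j) hjloc hjne
      have hrank : (bc H j).rank ≤ 2 * H.rank := rank_bc_le H j hj0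
      calc 2^(n+1) = 2 * 2^n := by ring
        _ ≤ 2 * (4^k' * (bc H j).rank) := Nat.mul_le_mul_left 2 hIH
        _ ≤ 2 * (4^k' * (2 * H.rank)) :=
            Nat.mul_le_mul_left 2 (Nat.mul_le_mul_left _ hrank)
        _ = 4^(k'+1) * H.rank := by ring


/-- Quantum Schwartz–Zippel: a non-zero `k`-local Hermitian operator on `n` qubits has
rank at least `2^{n - (2 log₂ e) k}`. -/
theorem kLocal_rank_lower_bound {n k : ℕ}
    (H : Matrix (Fin n → Fin 2) (Fin n → Fin 2) ℂ)
    (hH : H.IsHermitian) (hloc : IsKLocal k H) (hne : H ≠ 0) :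
    (2 : ℝ) ^ ((n : ℝ) - (2 * Real.logb 2 (Real.exp 1)) * k) ≤ (H.rank : ℝ) := by
  have hnat := key n k H hloc hne
  have hrankR : ((2:ℝ)^n) ≤ (4:ℝ)^k * (H.rank : ℝ) := by exact_mod_cast hnat
  have h4 : (0:ℝ) < 4^k := by positivity
  have hdiv : (2:ℝ)^n / 4^k ≤ (H.rank : ℝ) := by
    rw [div_le_iff₀ h4]
    nlinarith
  have step1 : (2:ℝ) ^ ((n:ℝ) - (2 * Real.logb 2 (Real.exp 1)) * k)
      ≤ (2:ℝ) ^ ((n:ℝ) - 2*k) := by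
    apply Real.rpow_le_rpow_of_exponent_le one_le_two
    have hlog : (1:ℝ) ≤ Real.logb 2 (Real.exp 1) := by
      rw [Real.logb, Real.log_exp, le_div_iff₀ (Real.log_pos one_lt_two)]
      nlinarith [Real.log_two_lt_d9]
    have hk : (0:ℝ) ≤ (k:ℝ) := Nat.cast_nonneg k
    nlinarith
  have step2 : (2:ℝ) ^ ((n:ℝ) - 2*k) = 2^n / 4^k := by
    rw [Real.rpow_sub two_pos, Real.rpow_natCast]
    congr 1
    rw [show (2*(k:ℝ)) = ((2*k : ℕ):ℝ) by push_cast; ring, Real.rpow_natCast, pow_mul]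
    norm_num
  calc (2:ℝ) ^ ((n:ℝ) - (2 * Real.logb 2 (Real.exp 1)) * k)
      ≤ (2:ℝ) ^ ((n:ℝ) - 2*k) := step1
    _ = 2^n / 4^k := step2
    _ ≤ (H.rank : ℝ) := hdiv
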